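/- Let A₁ and A₂ be finite multisets of integers with A₁ dominating A₂, and let x be an integer that appears in both A₁ and A₂ with the same multiplicity k. If A₁′ and A₂′ are obtained by removing all k copies of x from A₁ and A₂ respectively, then A₁′ dominates A₂′. -/

import Mathlib

/-- `A` dominates `B`: `|A| ≤ |B|` and for each `i < |A|`, the `i`-th smallest
element of `A` (counting multiplicities) is `≤` the `i`-th smallest element
of `B`. -/
def MDom (A B : Multiset ℤ) : Prop :=
  Multiset.card A ≤ Multiset.card B ∧
    ∀ i : ℕ, i < Multiset.card A →
      (Multiset.sort A (· ≤ ·)).getD i 0 ≤ (Multiset.sort B (· ≤ ·)).getD i 0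

lemma count_filter_neg (p : ℤ → Bool) (a : ℤ) (l : List ℤ) (h : p a = false) :
    List.count a (l.filter p) = 0 :=
  List.count_eq_zero.mpr (fun hm => by simpa [h] using (List.mem_filter.mp hm).2)

lemma sort_filter (p : ℤ → Prop) [DecidablePred p] (A : Multiset ℤ) :
    Multiset.sort (A.filter p) (· ≤ ·)
      = (Multiset.sort A (· ≤ ·)).filter (fun a => decide (p a)) := by
  refine (fun hp => List.Perm.eq_of_pairwise' (Multiset.pairwise_sort _ _)
    ((Multiset.pairwise_sort A _).filter _) hp) ?_
  rw [← Multiset.coe_eq_coe, Multiset.sort_eq, ← Multiset.filter_coe, Multiset.sort_eq]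

lemma sorted_decomp (x : ℤ) (l : List ℤ) (hs : l.Pairwise (· ≤ ·)) :
    l = l.filter (fun a => decide (a < x)) ++ List.replicate (l.count x) x
        ++ l.filter (fun a => decide (x < a)) := by
  refine (fun hp h2 => List.Perm.eq_of_pairwise' hs h2 hp) ?_ ?_
  · rw [List.perm_iff_count]
    intro a
    simp only [List.count_append, List.count_replicate]
    rcases lt_trichotomy a x with h | rfl | h
    · rw [List.count_filter (p := fun a => decide (a < x)) (by simpa using h),
        count_filter_neg _ _ _ (by simp [h.not_gt]),
        if_neg (by simp [h.ne'])]
      simp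
    · rw [count_filter_neg _ _ _ (by simp),
        count_filter_neg _ _ _ (by simp),
        if_pos (by simp)]
      simp
    · rw [List.count_filter (p := fun a => decide (x < a)) (by simpa using h),
        count_filter_neg _ _ _ (by simp [h.not_gt]),
        if_neg (by simp [h.ne])]
      simp
  · rw [List.pairwise_append, List.pairwise_append]
    refine ⟨⟨hs.filter _, List.pairwise_replicate.mpr (by simp), ?_⟩, hs.filter _, ?_⟩
    · intro a ha b hb
      have h1 : a < x := by simpa using (List.mem_filter.mp ha).2
      have hb' := List.eq_of_mem_replicate hb
      subst hb'
      exact le_of_lt h1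
    · intro a ha b hb
      have hbx : x < b := by simpa using (List.mem_filter.mp hb).2
      rcases List.mem_append.mp ha with h | h
      · have hax : a < x := by simpa using (List.mem_filter.mp h).2
        exact le_of_lt (hax.trans hbx)
      · have hax := List.eq_of_mem_replicate h
        subst hax
        exact le_of_lt hbx

lemma filter_ne_eq (x : ℤ) (l : List ℤ) (hs : l.Pairwise (· ≤ ·)) :
    l.filter (fun a => decide (a ≠ x))
      = l.filter (fun a => decide (a < x)) ++ l.filter (fun a => decide (x < a)) := by
  have e1 : (l.filter (fun a => decide (a < x))).filter (fun a => decide (a ≠ x))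
      = l.filter (fun a => decide (a < x)) :=
    List.filter_eq_self.mpr (fun a ha => by
      have : a < x := by simpa using (List.mem_filter.mp ha).2
      simp [this.ne])
  have e2 : (l.filter (fun a => decide (x < a))).filter (fun a => decide (a ≠ x))
      = l.filter (fun a => decide (x < a)) :=
    List.filter_eq_self.mpr (fun a ha => by
      have : x < a := by simpa using (List.mem_filter.mp ha).2
      simp [this.ne'])
  have e3 : (List.replicate (l.count x) x).filter (fun a => decide (a ≠ x))
      = [] :=
    List.filter_eq_nil_iff.mpr (fun a ha => by
      have := List.eq_of_mem_replicate ha; subst this; simp)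
  conv_lhs => rw [sorted_decomp x l hs]
  rw [List.filter_append, List.filter_append, e1, e2, e3, List.append_nil]

lemma len_eq (x : ℤ) (l : List ℤ) (hs : l.Pairwise (· ≤ ·)) :
    l.length = (l.filter (fun a => decide (a < x))).length + l.count x
      + (l.filter (fun a => decide (x < a))).length := by
  conv_lhs => rw [sorted_decomp x l hs]
  simp
  omega

lemma getD_lt (x : ℤ) (l : List ℤ) (hs : l.Pairwise (· ≤ ·)) {i : ℕ}
    (hip : i < (l.filter (fun a => decide (a < x))).length) :
    (l.filter (fun a => decide (a ≠ x))).getD i 0 = l.getD i 0 ∧ l.getD i 0 < x := by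
  have h1 : (l.filter (fun a => decide (a ≠ x))).getD i 0
      = (l.filter (fun a => decide (a < x))).getD i 0 := by
    rw [filter_ne_eq x l hs, List.getD_append _ _ _ _ hip]
  have h2 : l.getD i 0 = (l.filter (fun a => decide (a < x))).getD i 0 := by
    conv_lhs => rw [sorted_decomp x l hs]
    rw [List.getD_append _ _ _ _ (by simp; omega), List.getD_append _ _ _ _ hip]
  refine ⟨h1.trans h2.symm, ?_⟩
  rw [h2, List.getD_eq_getElem _ _ hip]
  simpa using (List.mem_filter.mp (List.getElem_mem hip)).2

lemma getD_ge (x : ℤ) (l : List ℤ) (hs : l.Pairwise (· ≤ ·)) {i : ℕ}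
    (hip : (l.filter (fun a => decide (a < x))).length ≤ i) :
    (l.filter (fun a => decide (a ≠ x))).getD i 0 = l.getD (i + l.count x) 0 := by
  rw [filter_ne_eq x l hs, List.getD_append_right _ _ _ _ hip]
  obtain ⟨k0, hk⟩ : ∃ k0, l.count x = k0 := ⟨_, rfl⟩
  have hd := sorted_decomp x l hs
  rw [hk] at hd ⊢
  conv_rhs => rw [hd]
  rw [List.append_assoc, List.getD_append_right _ _ _ _ (by omega),
    List.getD_append_right _ _ _ _ (by simp only [List.length_replicate]; omega)]
  congr 1
  simp only [List.length_replicate]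
  omega

lemma x_le_getD (x : ℤ) (l : List ℤ) (hs : l.Pairwise (· ≤ ·)) {j : ℕ}
    (hj : (l.filter (fun a => decide (a < x))).length ≤ j) (hj2 : j < l.length) :
    x ≤ l.getD j 0 := by
  have hlen := len_eq x l hs
  conv_rhs => rw [sorted_decomp x l hs]
  rw [List.append_assoc, List.getD_append_right _ _ _ _ hj]
  by_cases hc : j - (l.filter (fun a => decide (a < x))).length < l.count x
  · rw [List.getD_append _ _ _ _ (by simpa using hc),
      List.getD_eq_getElem _ _ (by simpa using hc)]
    simp
  · rw [List.getD_append_right _ _ _ _ (by simp only [List.length_replicate]; omega)]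
    simp only [List.length_replicate]
    have hb : j - (l.filter (fun a => decide (a < x))).length - l.count x
        < (l.filter (fun a => decide (x < a))).length := by
      omega
    rw [List.getD_eq_getElem _ _ hb]
    exact le_of_lt (by simpa using (List.mem_filter.mp (List.getElem_mem hb)).2)

/-- If `A₁` dominates `A₂` and `x` appears in both with the same multiplicity
`k`, then removing all `k` copies of `x` from both preserves domination. -/
theorem stmt_11 (k : ℕ) (hk : 1 ≤ k) (A₁ A₂ : Multiset ℤ) (x : ℤ)
    (hc₁ : A₁.count x = k) (hc₂ : A₂.count x = k) (hdom : MDom A₁ A₂) :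
    MDom (A₁.filter (· ≠ x)) (A₂.filter (· ≠ x)) := by
  obtain ⟨hcard, hle⟩ := hdom
  set a := Multiset.sort A₁ (· ≤ ·) with ha
  set b := Multiset.sort A₂ (· ≤ ·) with hb
  have hsa : a.Pairwise (· ≤ ·) := Multiset.pairwise_sort _ _
  have hsb : b.Pairwise (· ≤ ·) := Multiset.pairwise_sort _ _
  have hcoea : (a : Multiset ℤ) = A₁ := Multiset.sort_eq _ _
  have hcoeb : (b : Multiset ℤ) = A₂ := Multiset.sort_eq _ _
  have hca : a.count x = k := by rw [← hc₁, ← hcoea, Multiset.coe_count]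
  have hcb : b.count x = k := by rw [← hc₂, ← hcoeb, Multiset.coe_count]
  have hlena : Multiset.card A₁ = a.length := (Multiset.length_sort _).symm
  have hlenb : Multiset.card A₂ = b.length := (Multiset.length_sort _).symm
  have hsfa : Multiset.sort (A₁.filter (· ≠ x)) (· ≤ ·)
      = a.filter (fun t => decide (t ≠ x)) := sort_filter _ _
  have hsfb : Multiset.sort (A₂.filter (· ≠ x)) (· ≤ ·)
      = b.filter (fun t => decide (t ≠ x)) := sort_filter _ _
  have hcfa : Multiset.card (A₁.filter (· ≠ x)) = (a.filter (fun t => decide (t ≠ x))).length := by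
    rw [← Multiset.length_sort (r := (· ≤ ·)), hsfa]
  have hcfb : Multiset.card (A₂.filter (· ≠ x)) = (b.filter (fun t => decide (t ≠ x))).length := by
    rw [← Multiset.length_sort (r := (· ≤ ·)), hsfb]
  have hflena : (a.filter (fun t => decide (t ≠ x))).length + k = a.length := by
    rw [filter_ne_eq x a hsa, List.length_append]
    have := len_eq x a hsa
    rw [hca] at this
    omega
  have hflenb : (b.filter (fun t => decide (t ≠ x))).length + k = b.length := by
    rw [filter_ne_eq x b hsb, List.length_append]
    have := len_eq x b hsb
    rw [hcb] at this
    omega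
  have hab : a.length ≤ b.length := by omega
  constructor
  · rw [hcfa, hcfb]; omega
  · intro i hi
    rw [hcfa] at hi
    rw [hsfa, hsfb]
    have hik : i + k < a.length := by omega
    by_cases h1 : i < (a.filter (fun t => decide (t < x))).length
    · rw [(getD_lt x a hsa h1).1]
      by_cases h2 : i < (b.filter (fun t => decide (t < x))).length
      · rw [(getD_lt x b hsb h2).1]
        exact hle i (by omega)
      · rw [getD_ge x b hsb (le_of_not_gt h2), hcb]
        exact le_of_lt (lt_of_lt_of_le (getD_lt x a hsa h1).2
          (x_le_getD x b hsb (by omega) (by omega)))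
    · have hxa : x ≤ a.getD i 0 :=
        x_le_getD x a hsa (le_of_not_gt h1) (by omega)
      by_cases h2 : i < (b.filter (fun t => decide (t < x))).length
      · exfalso
        have hbi : b.getD i 0 < x := (getD_lt x b hsb h2).2
        have := hle i (by omega)
        omega
      · rw [getD_ge x a hsa (le_of_not_gt h1), getD_ge x b hsb (le_of_not_gt h2), hca, hcb]
        exact hle (i + k) (by omega)
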